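/- arXiv:1910.11921 — 2 statements merged into one kernel-verified Lean document; each statement's English description precedes it below -/
import Mathlib

section
/- If every vector of Q ⊆ F_2^n is within Hamming distance less than t of some vector in an r-dimensional subspace U ⊆ F_2^n, then there is a systematic linear data structure for the inner product problem on Q with redundancy r and query time less than t. Concretely: there exist vectors b_1, ..., b_r ∈ F_2^n such that for every q ∈ Q there is a set S_q of fewer than t coordinates and coefficients so that for all v ∈ F_2^n, ⟨q, v⟩ equals a fixed F_2-linear combination of ⟨b_1, v⟩, ..., ⟨b_r, v⟩ and the bits v[i] for i ∈ S_q. -/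
open Matrix in
/-- If every `q ∈ Q` is within Hamming distance `< t` of an `r`-dimensional
subspace `U`, then there is a systematic linear data structure with redundancy
`r` and query time `< t`: there are `b_1, …, b_r` such that every `⟨q, v⟩` is a
fixed `F_2`-linear combination of `⟨b_1,v⟩, …, ⟨b_r,v⟩` and fewer than `t`
coordinates of `v`. -/
theorem stmt_6 {n r t : ℕ} (Q : Set (Fin n → ZMod 2))
    (U : Submodule (ZMod 2) (Fin n → ZMod 2))
    (hU : Module.finrank (ZMod 2) ↥U = r)
    (hclose : ∀ q ∈ Q, ∃ u ∈ U, hammingDist q u < t) :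
    ∃ b : Fin r → (Fin n → ZMod 2),
      ∀ q ∈ Q, ∃ S : Finset (Fin n), S.card < t ∧
        ∃ c : Fin r → ZMod 2, ∃ d : Fin n → ZMod 2,
          ∀ v : Fin n → ZMod 2,
            q ⬝ᵥ v = (∑ j : Fin r, c j * (b j ⬝ᵥ v)) + ∑ i ∈ S, d i * v i := by
  haveI : Module.Finite (ZMod 2) ↥U := Module.Finite.of_injective U.subtype U.injective_subtype
  let B := Module.finBasisOfFinrankEq (ZMod 2) ↥U hU
  refine ⟨fun j => (B j : Fin n → ZMod 2), fun q hq => ?_⟩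
  obtain ⟨u, huU, hd⟩ := hclose q hq
  refine ⟨Finset.univ.filter (fun i => q i ≠ u i), hd, fun j => B.repr ⟨u, huU⟩ j,
    fun i => q i - u i, fun v => ?_⟩
  have hu : ∑ j : Fin r, B.repr ⟨u, huU⟩ j * ((B j : Fin n → ZMod 2) ⬝ᵥ v) = u ⬝ᵥ v := by
    let L : ↥U →ₗ[ZMod 2] ZMod 2 :=
      { toFun := fun w => (w : Fin n → ZMod 2) ⬝ᵥ v
        map_add' := fun a b => by simp [add_dotProduct]
        map_smul' := fun m a => by simp [smul_dotProduct] }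
    have hrep := B.sum_repr ⟨u, huU⟩
    have := congrArg L hrep
    rw [map_sum] at this
    simpa [L, smul_eq_mul] using this
  rw [hu]
  rw [show (∑ i ∈ Finset.univ.filter (fun i => q i ≠ u i), (q i - u i) * v i)
      = ∑ i : Fin n, (q i - u i) * v i from
    Finset.sum_subset (Finset.filter_subset _ _) (fun i _ hi => by
      simp only [Finset.mem_filter, Finset.mem_univ, true_and, not_not] at hi
      rw [hi, sub_self, zero_mul])]
  simp only [dotProduct]
  rw [← Finset.sum_add_distrib]
  exact Finset.sum_congr rfl fun i _ => by ring
end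

section
/- For a uniformly random M ∈ F_2^{√n × √n} and 1 ≤ k ≤ √n, E_M[ |E_{u,v}[(-1)^{uᵀMv}]|^k ] ≤ 2 · 2^{-9k√n/20}. -/
open Matrix Finset

lemma geom2 (a d : ℕ) (hd : 1 ≤ d) : ∀ n, ∑ j ∈ Finset.range (n+1), 2^(a + d*j) ≤ 2^(a + d*n + 1) := by
  intro n
  induction n with
  | zero => simp; exact Nat.pow_le_pow_right (by norm_num) (by omega)
  | succ n ih =>
    rw [Finset.sum_range_succ]
    have h1 : 2^(a + d*n + 1) + 2^(a + d*(n+1)) ≤ 2^(a + d*(n+1) + 1) := by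
      have h2 : a + d*n + 1 ≤ a + d*(n+1) := by nlinarith
      have e : 2^(a + d*(n+1) + 1) = 2^(a+d*(n+1)) + 2^(a+d*(n+1)) := by ring
      rw [e]
      exact Nat.add_le_add_right (Nat.pow_le_pow_right (by norm_num) h2) _
    exact le_trans (Nat.add_le_add_right ih _) h1

lemma nat_key_big (m k : ℕ) (hk1 : 1 ≤ k) (hkm : k ≤ m) (hbig : 39 ≤ k*m) :
    (∑ r ∈ Finset.range (m+1), 2^(min (m*m) (2*r*m) + k*(m-r))) * 2^((9*(k*m)+19)/20)
      ≤ 2^(1 + k*m + m*m) := by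
  set c := (9*(k*m)+19)/20 with hc
  have hm1 : 1 ≤ m := le_trans hk1 hkm
  set r1 := (m+1)/2 with hr1
  have hr1m : r1 ≤ m := by omega
  have hsplit : ∑ r ∈ Finset.range (m+1), 2^(min (m*m) (2*r*m) + k*(m-r))
      = (∑ r ∈ Finset.range r1, 2^(min (m*m) (2*r*m) + k*(m-r)))
        + ∑ r ∈ Finset.Ico r1 (m+1), 2^(min (m*m) (2*r*m) + k*(m-r)) := by
    rw [Finset.range_eq_Ico, ← Finset.sum_Ico_consecutive _ (Nat.zero_le r1) (show r1 ≤ m+1 by omega), Finset.range_eq_Ico]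
  -- Leg B : r < r1
  have legB : (∑ r ∈ Finset.range r1, 2^(min (m*m) (2*r*m) + k*(m-r)))
      ≤ 2^(k*m + (2*m-k)*(r1-1) + 1) := by
    have hB : ∀ r ∈ Finset.range r1, 2^(min (m*m) (2*r*m) + k*(m-r)) = 2^(k*m + (2*m-k)*r) := by
      intro r hr
      rw [Finset.mem_range] at hr
      have h2r : 2*r ≤ m := by omega
      congr 1
      have hmin : min (m*m) (2*r*m) = 2*r*m := min_eq_right (Nat.mul_le_mul_right _ h2r)
      rw [hmin]
      have h1 : k*(m-r) + k*r = k*m := by rw [← Nat.mul_add]; congr 1; omega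
      have h2 : (2*m-k)*r + k*r = 2*m*r := by
        rw [← Nat.add_mul]; congr 1; omega
      have h3 : 2*r*m = 2*m*r := by ring
      omega
    rw [Finset.sum_congr rfl hB]
    have : Finset.range r1 = Finset.range ((r1-1)+1) := by congr 1; omega
    rw [this]
    exact geom2 _ _ (by omega) _
  -- Leg A : r ≥ r1
  have legA : (∑ r ∈ Finset.Ico r1 (m+1), 2^(min (m*m) (2*r*m) + k*(m-r)))
      ≤ 2^(m*m + k*(m-r1) + 1) := by
    have hA : ∀ r ∈ Finset.Ico r1 (m+1), 2^(min (m*m) (2*r*m) + k*(m-r)) = 2^(m*m + k*(m-r)) := by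
      intro r hr
      rw [Finset.mem_Ico] at hr
      congr 2
      apply min_eq_left
      calc m*m ≤ (2*r1)*m := Nat.mul_le_mul_right _ (by omega)
        _ ≤ 2*r*m := Nat.mul_le_mul_right _ (by omega)
    rw [Finset.sum_congr rfl hA]
    have hre : ∑ r ∈ Finset.Ico r1 (m+1), 2^(m*m + k*(m-r))
        = ∑ j ∈ Finset.range (m - r1 + 1), 2^(m*m + k*j) := by
      apply Finset.sum_nbij' (fun r => m - r) (fun j => m - j)
      · intro a ha; rw [Finset.mem_Ico] at ha; rw [Finset.mem_range]; omega
      · intro a ha; rw [Finset.mem_range] at ha; rw [Finset.mem_Ico]; omega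
      · intro a ha; rw [Finset.mem_Ico] at ha; omega
      · intro a ha; rw [Finset.mem_range] at ha; omega
      · intro a ha; rfl
    rw [hre]
    exact geom2 _ _ hk1 _
  -- combine
  rw [hsplit, Nat.add_mul]
  have hck : 20*c ≤ 9*(k*m) + 19 := by omega
  -- condition A
  have hkr1 : k*m ≤ 2*(k*r1) := by
    calc k*m ≤ k*(2*r1) := Nat.mul_le_mul_left _ (by omega)
      _ = 2*(k*r1) := by ring
  have condA : m*m + k*(m-r1) + 1 + c ≤ k*m + m*m := by
    have h1 : k*(m-r1) + k*r1 = k*m := by rw [← Nat.mul_add]; congr 1; omega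
    omega
  -- condition B
  set t := r1 - 1 with ht
  have condB : k*m + (2*m-k)*t + 1 + c ≤ k*m + m*m := by
    have hQ1 : (2*m-k)*t + k*t = 2*(m*t) := by
      rw [← Nat.add_mul]
      have h4 : 2*m-k+k = 2*m := by omega
      rw [h4]; ring
    have hQ3 : 2*(m*t) + m ≤ m*m := by
      have h5 : 2*t+1 ≤ m := by omega
      calc 2*(m*t) + m = m*(2*t+1) := by ring
        _ ≤ m*m := Nat.mul_le_mul_left _ h5
    have hQ5 : k*m ≤ 2*(k*t) + 2*k := by
      have h6 : m ≤ 2*t+2 := by omega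
      calc k*m ≤ k*(2*t+2) := Nat.mul_le_mul_left _ h6
        _ = 2*(k*t) + 2*k := by ring
    have hkt : k*t ≤ m*t := Nat.mul_le_mul_right _ hkm
    have hkkm : k*1 ≤ k*m := Nat.mul_le_mul_left _ hm1
    omega
  refine le_trans (Nat.add_le_add (Nat.mul_le_mul_right _ legB) (Nat.mul_le_mul_right _ legA)) ?_
  rw [← pow_add, ← pow_add]
  have e2 : 2^(1+k*m+m*m) = 2^(k*m+m*m) + 2^(k*m+m*m) := by ring
  rw [e2]
  exact Nat.add_le_add (Nat.pow_le_pow_right (by norm_num) condB)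
    (Nat.pow_le_pow_right (by norm_num) condA)
set_option exponentiation.threshold 2000 in
lemma nat_key_small (m k : ℕ) (hk1 : 1 ≤ k) (hkm : k ≤ m) (hsmall : k*m ≤ 38) :
    (∑ r ∈ Finset.range (m+1), 2^(min (m*m) (2*r*m) + k*(m-r))) * 2^((9*(k*m)+19)/20)
      ≤ 2^(1 + k*m + m*m) := by
  have hk6 : k ≤ 6 := by nlinarith
  have hm38 : m ≤ 38 := by nlinarith
  interval_cases k <;> interval_cases m <;> first | decide +kernel | omega

lemma char_sum (m : ℕ) (w : Fin m → ZMod 2) :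
    ∑ u : Fin m → ZMod 2, (if u ⬝ᵥ w = 0 then (1:ℝ) else -1)
      = if w = 0 then (2:ℝ)^m else 0 := by
  by_cases hw : w = 0
  · subst hw
    simp only [dotProduct_zero, if_pos rfl, Finset.sum_const, Finset.card_univ,
      nsmul_eq_mul, mul_one, if_true]
    simp [Fintype.card_pi, ZMod.card]
  · rw [if_neg hw]
    obtain ⟨j, hj⟩ : ∃ j, w j ≠ 0 := by
      by_contra h; push_neg at h; exact hw (funext h)
    have hwj : w j = 1 := by
      have h2 : ∀ x : ZMod 2, x ≠ 0 → x = 1 := by decide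
      exact h2 _ hj
    have key : ∑ u : Fin m → ZMod 2, (if (u + Pi.single j 1) ⬝ᵥ w = 0 then (1:ℝ) else -1)
        = ∑ u : Fin m → ZMod 2, (if u ⬝ᵥ w = 0 then (1:ℝ) else -1) :=
      Fintype.sum_equiv (Equiv.addRight (Pi.single j 1)) _ _ (fun u => rfl)
    have flip : ∀ u : Fin m → ZMod 2,
        (if (u + Pi.single j 1) ⬝ᵥ w = 0 then (1:ℝ) else -1)
          = -(if u ⬝ᵥ w = 0 then (1:ℝ) else -1) := by
      intro u
      rw [add_dotProduct, single_dotProduct, hwj, one_mul]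
      rcases (show u ⬝ᵥ w = 0 ∨ u ⬝ᵥ w = 1 by
        have h2 : ∀ x : ZMod 2, x = 0 ∨ x = 1 := by decide
        exact h2 _) with h | h
      · rw [h, if_pos rfl, if_neg (by decide)]
      · rw [h, if_pos (by decide), if_neg (by decide), neg_neg]
    rw [Finset.sum_congr rfl (fun u _ => flip u), Finset.sum_neg_distrib] at key
    linarith

lemma ker_card (m : ℕ) (M : Matrix (Fin m) (Fin m) (ZMod 2)) :
    (Finset.univ.filter fun v : Fin m → ZMod 2 => M.mulVec v = 0).card = 2^(m - M.rank) := by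
  haveI : Fintype (LinearMap.ker M.mulVecLin) := Fintype.ofFinite _
  have h1 : (Finset.univ.filter fun v : Fin m → ZMod 2 => M.mulVec v = 0).card
      = Nat.card (LinearMap.ker M.mulVecLin) := by
    rw [← Fintype.card_subtype, ← Nat.card_eq_fintype_card]
    exact Nat.card_congr (Equiv.subtypeEquivRight fun v => by
      simp [LinearMap.mem_ker, Matrix.mulVecLin_apply])
  rw [h1, Nat.card_eq_fintype_card, Module.card_eq_pow_finrank (K := ZMod 2), ZMod.card]
  congr 1
  have h2 := LinearMap.finrank_range_add_finrank_ker M.mulVecLin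
  have h3 : Module.finrank (ZMod 2) (Fin m → ZMod 2) = m := by
    simp [Module.finrank_pi]
  rw [h3] at h2
  have h4 : M.rank = Module.finrank (ZMod 2) (LinearMap.range M.mulVecLin) := rfl
  omega

lemma inner_val (m : ℕ) (M : Matrix (Fin m) (Fin m) (ZMod 2)) :
    ∑ u : Fin m → ZMod 2, ∑ v : Fin m → ZMod 2,
        (if u ⬝ᵥ M.mulVec v = 0 then (1:ℝ) else -1)
      = 2^m * 2^(m - M.rank) := by
  rw [Finset.sum_comm]
  calc ∑ v : Fin m → ZMod 2, ∑ u : Fin m → ZMod 2,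
        (if u ⬝ᵥ M.mulVec v = 0 then (1:ℝ) else -1)
      = ∑ v : Fin m → ZMod 2, (if M.mulVec v = 0 then (2:ℝ)^m else 0) := by
        exact Finset.sum_congr rfl fun v _ => char_sum m (M.mulVec v)
    _ = ((Finset.univ.filter fun v : Fin m → ZMod 2 => M.mulVec v = 0).card : ℝ) * 2^m := by
        rw [Finset.sum_ite, Finset.sum_const, Finset.sum_const]
        simp [nsmul_eq_mul]
    _ = 2^m * 2^(m - M.rank) := by
        rw [ker_card]
        push_cast
        ring

lemma card_matrix (m n : ℕ) : Fintype.card (Matrix (Fin m) (Fin n) (ZMod 2)) = 2^(m*n) := by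
  have h : Fintype.card (Matrix (Fin m) (Fin n) (ZMod 2))
      = Fintype.card (Fin m → Fin n → ZMod 2) := Fintype.card_congr (Equiv.refl _)
  rw [h]
  simp [Fintype.card_pi, ZMod.card, Fintype.card_fun]
  rw [← pow_mul, Nat.mul_comm]

lemma exists_factor (m r : ℕ) (M : Matrix (Fin m) (Fin m) (ZMod 2)) (h : M.rank = r) :
    ∃ (A : Matrix (Fin m) (Fin r) (ZMod 2)) (B : Matrix (Fin r) (Fin m) (ZMod 2)),
      A * B = M := by
  set W := LinearMap.range M.mulVecLin with hW
  have hfin : Module.finrank (ZMod 2) W = r := h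
  let b : Module.Basis (Fin r) (ZMod 2) W := Module.finBasisOfFinrankEq _ _ hfin
  refine ⟨Matrix.of (fun i j => ((b j : Fin m → ZMod 2)) i),
    Matrix.of (fun j i => b.repr ⟨M.mulVec (Pi.single i 1), ⟨Pi.single i 1, rfl⟩⟩ j), ?_⟩
  ext i i'
  set x : W := ⟨M.mulVec (Pi.single i' 1), ⟨Pi.single i' 1, rfl⟩⟩ with hx
  have hrepr : (∑ j, b.repr x j • b j : W) = x := b.sum_repr x
  have hxi : (x : Fin m → ZMod 2) i = M i i' := by
    show (M.mulVec (Pi.single i' 1)) i = M i i'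
    simp [Matrix.mulVec_single]
  rw [Matrix.mul_apply]
  simp only [Matrix.of_apply]
  show ∑ j, ((b j : Fin m → ZMod 2)) i * (b.repr x) j = M i i'
  rw [← hxi]
  conv_rhs => rw [← hrepr]
  rw [Submodule.coe_sum, Finset.sum_apply]
  apply Finset.sum_congr rfl
  intro j _
  simp [smul_eq_mul, mul_comm]

lemma count_rank (m r : ℕ) :
    ((Finset.univ : Finset (Matrix (Fin m) (Fin m) (ZMod 2))).filter
        (fun M => M.rank = r)).card ≤ 2^(min (m*m) (2*r*m)) := by
  rcases le_total (m*m) (2*r*m) with h | h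
  · rw [min_eq_left h]
    calc _ ≤ (Finset.univ : Finset (Matrix (Fin m) (Fin m) (ZMod 2))).card :=
          Finset.card_filter_le _ _
      _ = 2^(m*m) := by rw [Finset.card_univ, card_matrix]
  · rw [min_eq_right h]
    have hsurj : Set.SurjOn
        (fun p : Matrix (Fin m) (Fin r) (ZMod 2) × Matrix (Fin r) (Fin m) (ZMod 2) => p.1 * p.2)
        (Finset.univ : Finset (Matrix (Fin m) (Fin r) (ZMod 2) × Matrix (Fin r) (Fin m) (ZMod 2)))
        (((Finset.univ : Finset (Matrix (Fin m) (Fin m) (ZMod 2))).filter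
          (fun M => M.rank = r)) : Set (Matrix (Fin m) (Fin m) (ZMod 2))) := by
      intro M hM
      simp only [Finset.coe_filter, Set.mem_setOf_eq] at hM
      obtain ⟨A, B, hAB⟩ := exists_factor m r M hM.2
      exact ⟨(A, B), by simp, hAB⟩
    calc _ ≤ (Finset.univ : Finset (Matrix (Fin m) (Fin r) (ZMod 2) × Matrix (Fin r) (Fin m) (ZMod 2))).card :=
          Finset.card_le_card_of_surjOn _ hsurj
      _ = 2^(2*r*m) := by
          rw [Finset.card_univ, Fintype.card_prod, card_matrix, card_matrix, ← pow_add]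
          congr 1
          ring

lemma nat_key (m k : ℕ) (hk1 : 1 ≤ k) (hkm : k ≤ m) :
    (∑ r ∈ Finset.range (m+1), 2^(min (m*m) (2*r*m) + k*(m-r))) * 2^((9*(k*m)+19)/20)
      ≤ 2^(1 + k*m + m*m) := by
  rcases le_or_gt (k*m) 38 with h | h
  · exact nat_key_small m k hk1 hkm h
  · exact nat_key_big m k hk1 hkm (by omega)

open Matrix in
/-- For uniformly random `M ∈ F_2^{m×m}` and `1 ≤ k ≤ m` (`m = √n`):
`E_M[ |E_{u,v}[(-1)^{uᵀMv}]|^k ] ≤ 2 · 2^{-9km/20}`. -/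
theorem stmt_15 (m k : ℕ) (hk1 : 1 ≤ k) (hkm : k ≤ m) :
    (∑ M : Matrix (Fin m) (Fin m) (ZMod 2),
        |(∑ u : Fin m → ZMod 2, ∑ v : Fin m → ZMod 2,
            (if u ⬝ᵥ M.mulVec v = 0 then (1 : ℝ) else -1)) /
          ((2 : ℝ) ^ m * (2 : ℝ) ^ m)| ^ k) / (2 : ℝ) ^ (m * m) ≤
      2 * (2 : ℝ) ^ (-(9 * (k : ℝ) * m) / 20) := by
  set c : ℕ := (9*(k*m)+19)/20 with hc
  -- step 1: per-matrix value
  have key1 : ∀ M : Matrix (Fin m) (Fin m) (ZMod 2),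
      |(∑ u : Fin m → ZMod 2, ∑ v : Fin m → ZMod 2,
          (if u ⬝ᵥ M.mulVec v = 0 then (1 : ℝ) else -1)) /
        ((2 : ℝ) ^ m * (2 : ℝ) ^ m)| ^ k
      = (2:ℝ)^((m - M.rank)*k) / 2^(m*k) := by
    intro M
    rw [inner_val m M]
    have h2m : ((2:ℝ)^m) ≠ 0 := by positivity
    rw [mul_div_mul_left _ _ h2m]
    rw [abs_of_nonneg (by positivity)]
    rw [div_pow, ← pow_mul, ← pow_mul]
  rw [Finset.sum_congr rfl (fun M _ => key1 M), ← Finset.sum_div]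
  -- step 2: the natural number sum and its bound
  set N : ℕ := ∑ M : Matrix (Fin m) (Fin m) (ZMod 2), 2^((m - M.rank)*k) with hN
  have hcast : ∑ M : Matrix (Fin m) (Fin m) (ZMod 2), (2:ℝ)^((m - M.rank)*k) = (N:ℝ) := by
    rw [hN]; push_cast; rfl
  rw [hcast]
  -- step 3: N ≤ grouped sum
  have hgroup : N ≤ ∑ r ∈ Finset.range (m+1), 2^(min (m*m) (2*r*m) + k*(m-r)) := by
    rw [hN]
    rw [← Finset.sum_fiberwise_of_maps_to (g := fun M : Matrix (Fin m) (Fin m) (ZMod 2) => M.rank)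
      (t := Finset.range (m+1))
      (fun M _ => Finset.mem_range.mpr (Nat.lt_succ_of_le (Matrix.rank_le_width M)))
      (fun M => 2^((m - M.rank)*k))]
    apply Finset.sum_le_sum
    intro r _
    have hconst : ∀ M ∈ Finset.univ.filter
        (fun M : Matrix (Fin m) (Fin m) (ZMod 2) => M.rank = r),
        2^((m - M.rank)*k) = 2^((m-r)*k) := by
      intro M hM
      rw [Finset.mem_filter] at hM
      rw [hM.2]
    rw [Finset.sum_congr rfl hconst, Finset.sum_const, smul_eq_mul]
    calc _ ≤ 2^(min (m*m) (2*r*m)) * 2^((m-r)*k) :=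
          Nat.mul_le_mul_right _ (count_rank m r)
      _ = 2^(min (m*m) (2*r*m) + k*(m-r)) := by rw [← pow_add, Nat.mul_comm k]
  have hnat : N * 2^c ≤ 2^(1 + k*m + m*m) :=
    le_trans (Nat.mul_le_mul_right _ hgroup) (nat_key m k hk1 hkm)
  -- step 4: conclude over ℝ
  have main : (N:ℝ) / 2^(m*k) / 2^(m*m) ≤ 2 / 2^c := by
    rw [div_div, ← pow_add]
    rw [div_le_div_iff₀ (by positivity) (by positivity)]
    calc (N:ℝ) * 2^c ≤ ((2:ℝ))^(1+k*m+m*m) := by exact_mod_cast hnat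
      _ = 2 * 2^(m*k+m*m) := by
          rw [pow_add, pow_add, pow_one, pow_add (2:ℝ) (m*k), Nat.mul_comm m k]
          ring
  refine le_trans main ?_
  have hrpow : (2:ℝ)^(-(c:ℝ)) ≤ (2:ℝ)^(-(9 * (k:ℝ) * m) / 20) := by
    apply Real.rpow_le_rpow_of_exponent_le one_le_two
    rw [neg_le, ← neg_div]
    have h9 : 9*(k*m) ≤ 20*c := by omega
    have : (9 * (k:ℝ) * m) / 20 ≤ (c:ℝ) := by
      rw [div_le_iff₀ (by norm_num)]
      calc (9:ℝ) * k * m = ((9*(k*m) : ℕ) : ℝ) := by push_cast; ring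
        _ ≤ ((20*c : ℕ):ℝ) := by exact_mod_cast h9
        _ = (c:ℝ) * 20 := by push_cast; ring
    linarith
  calc (2:ℝ) / 2^c = 2 * (2:ℝ)^(-(c:ℝ)) := by
        rw [Real.rpow_neg (by norm_num), Real.rpow_natCast]
        ring
    _ ≤ 2 * (2:ℝ)^(-(9 * (k:ℝ) * m) / 20) := by
        have h0 : (0:ℝ) ≤ 2 := by norm_num
        exact mul_le_mul_of_nonneg_left hrpow h0
end
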